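/- arXiv:2306.16889 — 2 statements merged into one kernel-verified Lean document; each statement's English description precedes it below -/
import Mathlib

section
/- ∑_{k=1}^∞ (8/3)^k / C(3k,k) = 32/49 + (74√3·π)/343 − (18/343)·log 3. -/
open Real MeasureTheory intervalIntegral

lemma beta_nat : ∀ (n m : ℕ), ∫ x in (0:ℝ)..1, x^m * (1-x)^n
    = (m.factorial * n.factorial : ℝ) / ((m+n+1).factorial) := by
  intro n
  induction n with
  | zero =>
    intro m
    simp only [pow_zero, mul_one, integral_pow, one_pow, Nat.factorial_zero, Nat.cast_one,
      mul_one, Nat.add_zero, zero_add]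
    rw [Nat.factorial_succ]
    have : ((m:ℝ)+1) ≠ 0 := by positivity
    have : ((m.factorial :ℝ)) ≠ 0 := by positivity
    push_cast
    field_simp
    simp
  | succ n ih =>
    intro m
    have key : ∫ x in (0:ℝ)..1,
        (x^m * (1-x)^(n+1) - ((n+1:ℝ)/(m+1)) * (x^(m+1) * (1-x)^n)) = 0 := by
      have hd : ∀ x ∈ Set.uIcc (0:ℝ) 1, HasDerivAt
          (fun y : ℝ => y^(m+1) * (1-y)^(n+1) / (m+1))
          (x^m * (1-x)^(n+1) - ((n+1:ℝ)/(m+1)) * (x^(m+1) * (1-x)^n)) x := by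
        intro x _
        have h1 : HasDerivAt (fun y : ℝ => y^(m+1)) ((m+1 : ℝ) * x^m) x := by
          simpa using hasDerivAt_pow (m+1) x
        have h2 : HasDerivAt (fun y : ℝ => (1-y)^(n+1)) (-((n+1 : ℝ) * (1-x)^n)) x := by
          have hs : HasDerivAt (fun y : ℝ => 1 - y) (-1) x := by
            simpa using (hasDerivAt_id x).const_sub 1
          simpa [mul_comm, mul_assoc] using (hs.fun_pow (n+1))
        have := (h1.mul h2).div_const ((m:ℝ)+1)
        refine this.congr_deriv ?_
        have hm : ((m:ℝ)+1) ≠ 0 := by positivity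
        field_simp
        ring
      have hint : IntervalIntegrable
          (fun x : ℝ => x^m * (1-x)^(n+1) - ((n+1:ℝ)/(m+1)) * (x^(m+1) * (1-x)^n))
          volume 0 1 := by
        apply Continuous.intervalIntegrable
        continuity
      rw [integral_eq_sub_of_hasDerivAt hd hint]
      norm_num
    have hint1 : IntervalIntegrable (fun x : ℝ => x^m * (1-x)^(n+1)) volume 0 1 := by
      apply Continuous.intervalIntegrable; continuity
    have hint2 : IntervalIntegrable (fun x : ℝ => x^(m+1) * (1-x)^n) volume 0 1 := by
      apply Continuous.intervalIntegrable; continuity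
    rw [intervalIntegral.integral_sub hint1 (hint2.const_mul _),
        intervalIntegral.integral_const_mul, ih (m+1), sub_eq_zero] at key
    rw [key]
    have h1 : ((m + (n+1) + 1).factorial : ℝ) ≠ 0 := by positivity
    have h2 : ((m + 1 + n + 1).factorial : ℝ) ≠ 0 := by positivity
    have e1 : (m+1) + n + 1 = (m + (n+1) + 1) := by ring
    rw [e1]
    rw [Nat.factorial_succ (m), Nat.factorial_succ (n)]
    push_cast
    field_simp

lemma term_eq (k : ℕ) :
    (8/3 : ℝ)^(k+1) / ((((3*(k+1)).choose (k+1) : ℕ)) : ℝ) =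
    ∫ x in Set.Ioc (0:ℝ) 1, (3*(k:ℝ)+4) * ((8/3) * (x*(1-x)^2))^(k+1) := by
  rw [← intervalIntegral.integral_of_le (by norm_num : (0:ℝ) ≤ 1)]
  have h1 : ∀ x : ℝ, (3*(k:ℝ)+4) * ((8/3) * (x*(1-x)^2))^(k+1)
      = ((3*(k:ℝ)+4) * (8/3)^(k+1)) * (x^(k+1) * (1-x)^(2*(k+1))) := by
    intro x
    rw [mul_pow, mul_pow, ← pow_mul]
    ring
  simp_rw [h1]
  rw [intervalIntegral.integral_const_mul, beta_nat (2*(k+1)) (k+1)]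
  have hc : ((3*(k+1)).choose (k+1) : ℝ) * ((k+1).factorial * (2*(k+1)).factorial)
      = ((3*(k+1)).factorial : ℝ) := by
    have := Nat.choose_mul_factorial_mul_factorial
      (show k+1 ≤ 3*(k+1) by omega)
    have h2 : 3*(k+1) - (k+1) = 2*(k+1) := by omega
    rw [h2] at this
    calc ((3*(k+1)).choose (k+1) : ℝ) * ((k+1).factorial * (2*(k+1)).factorial)
        = (((3*(k+1)).choose (k+1) * (k+1).factorial * (2*(k+1)).factorial : ℕ) : ℝ) := by
          push_cast; ring
      _ = _ := by rw [this]
  have e1 : k+1 + 2*(k+1) + 1 = 3*(k+1)+1 := by ring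
  rw [e1]
  have e2 : (((3*(k+1)+1).factorial : ℕ) : ℝ) = (3*(k:ℝ)+4) * ((3*(k+1)).factorial : ℝ) := by
    rw [Nat.factorial_succ]
    push_cast
    ring
  rw [e2]
  have hch : ((3*(k+1)).choose (k+1) : ℝ) ≠ 0 := by
    have := Nat.choose_pos (show k+1 ≤ 3*(k+1) by omega)
    positivity
  have hf1 : ((k+1).factorial : ℝ) ≠ 0 := by positivity
  have hf2 : ((2*(k+1)).factorial : ℝ) ≠ 0 := by positivity
  have hf3 : (((3*(k+1)).factorial) : ℝ) ≠ 0 := by positivity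
  have hk4 : (3*(k:ℝ)+4) ≠ 0 := by positivity
  field_simp
  linear_combination (-1 : ℝ) * hc

lemma t_bounds {x : ℝ} (hx0 : 0 ≤ x) (hx1 : x ≤ 1) :
    0 ≤ (8/3 : ℝ) * (x*(1-x)^2) ∧ (8/3 : ℝ) * (x*(1-x)^2) ≤ 32/81 := by
  constructor
  · have : 0 ≤ x*(1-x)^2 := by positivity
    linarith
  · nlinarith [sq_nonneg (3*x-1), mul_nonneg (sq_nonneg (3*x-1)) (by linarith : (0:ℝ) ≤ 4 - 3*x)]

lemma pointwise_sum {x : ℝ} (hx0 : 0 ≤ x) (hx1 : x ≤ 1) :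
    ∑' k : ℕ, (3*(k:ℝ)+4) * ((8/3) * (x*(1-x)^2))^(k+1) =
    27/((3-2*x)*(4*x^2-2*x+1))^2 - 6/((3-2*x)*(4*x^2-2*x+1)) - 1 := by
  set t : ℝ := (8/3) * (x*(1-x)^2) with ht
  obtain ⟨h0', h1'⟩ := t_bounds hx0 hx1
  have h0 : (0:ℝ) ≤ t := h0'
  have h1 : t ≤ 32/81 := h1'
  have htlt : t < 1 := lt_of_le_of_lt h1 (by norm_num)
  have hnorm : ‖t‖ < 1 := by rw [Real.norm_eq_abs, abs_of_nonneg h0]; exact htlt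
  have hs1 : Summable (fun k : ℕ => (k:ℝ) * t^k) := by
    have := summable_pow_mul_geometric_of_norm_lt_one 1 hnorm (R := ℝ)
    simpa using this
  have hs2 : Summable (fun k : ℕ => t^k) := summable_geometric_of_lt_one h0 htlt
  have hsplit : ∀ k : ℕ, (3*(k:ℝ)+4) * t^(k+1) = (3*t) * ((k:ℝ)*t^k) + (4*t) * t^k := by
    intro k; ring
  rw [tsum_congr hsplit, Summable.tsum_add ((hs1.mul_left _)) (hs2.mul_left _),
      tsum_mul_left, tsum_mul_left,
      tsum_coe_mul_geometric_of_norm_lt_one hnorm, tsum_geometric_of_lt_one h0 htlt]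
  have hD : (3-2*x)*(4*x^2-2*x+1) = 3*(1-t) := by rw [ht]; ring
  have hu : (0:ℝ) < 1 - t := by linarith
  have hune : (1-t) ≠ 0 := ne_of_gt hu
  rw [hD]
  clear_value t
  clear ht hD h0 h1 htlt hnorm hs1 hs2 hsplit
  have hu3 : (3*(1-t)) ≠ 0 := by positivity
  field_simp
  ring

noncomputable def FF (x : ℝ) : ℝ :=
  (12/343)*Real.log (3-2*x) - (6/343)*Real.log (4*x^2-2*x+1)
  + (148*Real.sqrt 3/343)*Real.arctan ((4*x-1)/Real.sqrt 3)
  + (27/98)*(3-2*x)⁻¹ + (198*x-117)/(98*(4*x^2-2*x+1)) - x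

lemma FF_deriv {x : ℝ} (hx0 : 0 ≤ x) (hx1 : x ≤ 1) :
    HasDerivAt FF
      (27/((3-2*x)*(4*x^2-2*x+1))^2 - 6/((3-2*x)*(4*x^2-2*x+1)) - 1) x := by
  have hL0 : (0:ℝ) < 3-2*x := by linarith
  have hLne : (3-2*x) ≠ 0 := ne_of_gt hL0
  have hQ0 : (0:ℝ) < 4*x^2-2*x+1 := by nlinarith [sq_nonneg (2*x-1)]
  have hQne : (4*x^2-2*x+1) ≠ 0 := ne_of_gt hQ0
  have hs3 : Real.sqrt 3 ≠ 0 := by positivity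
  have hs3sq : Real.sqrt 3 ^ 2 = 3 := Real.sq_sqrt (by norm_num)
  have hL : HasDerivAt (fun y : ℝ => 3-2*y) (-2) x := by
    simpa using ((hasDerivAt_id x).const_mul (2:ℝ)).const_sub 3
  have hQ : HasDerivAt (fun y : ℝ => 4*y^2-2*y+1) (8*x-2) x := by
    have := (((hasDerivAt_pow 2 x).const_mul (4:ℝ)).sub
      ((hasDerivAt_id x).const_mul (2:ℝ))).add_const 1
    refine this.congr_deriv ?_
    push_cast
    ring
  have h1 : HasDerivAt (fun y : ℝ => (12/343)*Real.log (3-2*y))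
      ((12/343) * (-2/(3-2*x))) x := (hL.log hLne).const_mul _
  have h2 : HasDerivAt (fun y : ℝ => (6/343)*Real.log (4*y^2-2*y+1))
      ((6/343) * ((8*x-2)/(4*x^2-2*x+1))) x := (hQ.log hQne).const_mul _
  have hin : HasDerivAt (fun y : ℝ => (4*y-1)/Real.sqrt 3) (4/Real.sqrt 3) x := by
    have := (((hasDerivAt_id x).const_mul (4:ℝ)).sub_const 1).div_const (Real.sqrt 3)
    simpa using this
  have h3 : HasDerivAt (fun y : ℝ => (148*Real.sqrt 3/343)*Real.arctan ((4*y-1)/Real.sqrt 3))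
      ((148*Real.sqrt 3/343) * ((4/Real.sqrt 3) / (1 + ((4*x-1)/Real.sqrt 3)^2))) x := by
    have := (hin.arctan).const_mul (148*Real.sqrt 3/343)
    refine this.congr_deriv ?_
    ring
  have h4 : HasDerivAt (fun y : ℝ => (27/98)*(3-2*y)⁻¹)
      ((27/98) * (-(-2)/(3-2*x)^2)) x := (hL.inv hLne).const_mul _
  have h5num : HasDerivAt (fun y : ℝ => 198*y-117) 198 x := by
    simpa using ((hasDerivAt_id x).const_mul (198:ℝ)).sub_const 117
  have h5den : HasDerivAt (fun y : ℝ => 98*(4*y^2-2*y+1)) (98*(8*x-2)) x :=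
    hQ.const_mul _
  have h5 : HasDerivAt (fun y : ℝ => (198*y-117)/(98*(4*y^2-2*y+1)))
      ((198 * (98*(4*x^2-2*x+1)) - (198*x-117) * (98*(8*x-2))) / (98*(4*x^2-2*x+1))^2) x :=
    h5num.div h5den (by positivity)
  have hx' : HasDerivAt (fun y : ℝ => y) 1 x := hasDerivAt_id x
  have htot := ((((h1.sub h2).add h3).add h4).add h5).sub hx'
  refine htot.congr_deriv ?_
  have harc : 1 + ((4*x-1)/Real.sqrt 3)^2 = (4*(4*x^2-2*x+1))/3 := by
    rw [div_pow, hs3sq]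
    field_simp
    ring
  rw [harc]
  field_simp
  have hQ' : x*(x*4-2)+1 ≠ 0 := by nlinarith [sq_nonneg (2*x-1)]
  field_simp
  ring

lemma integral_g : ∫ x in (0:ℝ)..1,
      (27/((3-2*x)*(4*x^2-2*x+1))^2 - 6/((3-2*x)*(4*x^2-2*x+1)) - 1) =
    32/49 + (74*Real.sqrt 3*π)/343 - (18/343)*Real.log 3 := by
  have hcont : ContinuousOn (fun x : ℝ =>
      (27/((3-2*x)*(4*x^2-2*x+1))^2 - 6/((3-2*x)*(4*x^2-2*x+1)) - 1)) (Set.uIcc 0 1) := by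
    apply ContinuousOn.sub
    apply ContinuousOn.sub
    · apply ContinuousOn.div continuousOn_const
      · fun_prop
      · intro x hx
        rw [Set.uIcc_of_le (by norm_num : (0:ℝ) ≤ 1)] at hx
        have h1 : (0:ℝ) < 3-2*x := by have := hx.2; linarith
        have h2 : (0:ℝ) < 4*x^2-2*x+1 := by nlinarith [sq_nonneg (2*x-1)]
        positivity
    · apply ContinuousOn.div continuousOn_const
      · fun_prop
      · intro x hx
        rw [Set.uIcc_of_le (by norm_num : (0:ℝ) ≤ 1)] at hx
        have h1 : (0:ℝ) < 3-2*x := by have := hx.2; linarith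
        have h2 : (0:ℝ) < 4*x^2-2*x+1 := by nlinarith [sq_nonneg (2*x-1)]
        positivity
    · exact continuousOn_const
  rw [intervalIntegral.integral_eq_sub_of_hasDerivAt (f := FF)
    (fun x hx => by
      rw [Set.uIcc_of_le (by norm_num : (0:ℝ) ≤ 1)] at hx
      exact FF_deriv hx.1 hx.2)
    (hcont.intervalIntegrable)]
  have hs3 : Real.sqrt 3 ≠ 0 := by positivity
  have hs30 : (0:ℝ) < Real.sqrt 3 := by positivity
  have hs3sq : Real.sqrt 3 ^ 2 = 3 := Real.sq_sqrt (by norm_num)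
  have harc1 : Real.arctan ((4*(1:ℝ)-1)/Real.sqrt 3) = π/3 := by
    have h : (4*(1:ℝ)-1)/Real.sqrt 3 = Real.sqrt 3 := by
      rw [show (4*(1:ℝ)-1) = 3 by norm_num, ← hs3sq]
      field_simp [sq]
      rw [Real.sqrt_sq hs30.le]
    rw [h, ← Real.tan_pi_div_three, Real.arctan_tan]
    · linarith [Real.pi_pos]
    · linarith [Real.pi_pos]
  have harc0 : Real.arctan ((4*(0:ℝ)-1)/Real.sqrt 3) = -(π/6) := by
    have h : (4*(0:ℝ)-1)/Real.sqrt 3 = -(1/Real.sqrt 3) := by ring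
    rw [h, Real.arctan_neg, ← Real.tan_pi_div_six, Real.arctan_tan]
    · linarith [Real.pi_pos]
    · linarith [Real.pi_pos]
  unfold FF
  rw [harc1, harc0]
  norm_num
  ring

theorem stmt_5 :
    ∑' k : ℕ, (8/3 : ℝ)^(k+1) / ((((3*(k+1)).choose (k+1) : ℕ)) : ℝ) =
    32/49 + (74*Real.sqrt 3*π)/343 - (18/343)*Real.log 3 := by
  set G : ℕ → ℝ → ℝ := fun k x => (3*(k:ℝ)+4) * ((8/3) * (x*(1-x)^2))^(k+1) with hG
  have hcontG : ∀ k, Continuous (G k) := by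
    intro k; rw [hG]; fun_prop
  have hint : ∀ k, IntegrableOn (G k) (Set.Ioc (0:ℝ) 1) := fun k =>
    (hcontG k).integrableOn_Ioc
  have hmfin : volume (Set.Ioc (0:ℝ) 1) < ⊤ := by
    rw [Real.volume_Ioc]; norm_num
  have hbound : ∀ k : ℕ, ∀ x ∈ Set.Ioc (0:ℝ) 1, ‖G k x‖ ≤ (3*(k:ℝ)+4) * (32/81)^(k+1) := by
    intro k x hx
    obtain ⟨ht0, ht1⟩ := t_bounds hx.1.le hx.2
    rw [hG]
    simp only [Real.norm_eq_abs]
    rw [abs_of_nonneg (by positivity)]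
    have : ((8/3 : ℝ) * (x*(1-x)^2))^(k+1) ≤ (32/81 : ℝ)^(k+1) :=
      pow_le_pow_left₀ ht0 ht1 _
    nlinarith [this, (by positivity : (0:ℝ) ≤ 3*(k:ℝ)+4)]
  have hCk : Summable (fun k : ℕ => (3*(k:ℝ)+4) * (32/81)^(k+1)) := by
    have h1 : Summable (fun k : ℕ => (k:ℝ) * (32/81)^k) := by
      have := summable_pow_mul_geometric_of_norm_lt_one 1 (R := ℝ)
        (r := 32/81) (by rw [Real.norm_eq_abs]; rw [abs_of_nonneg] <;> norm_num)
      simpa using this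
    have h2 : Summable (fun k : ℕ => (32/81 : ℝ)^k) :=
      summable_geometric_of_lt_one (by norm_num) (by norm_num)
    have := ((h1.mul_left 3).add (h2.mul_left 4)).mul_left (32/81 : ℝ)
    apply this.congr
    intro k
    ring
  have hnormsum : Summable (fun k : ℕ => ∫ x in Set.Ioc (0:ℝ) 1, ‖G k x‖) := by
    apply Summable.of_nonneg_of_le
      (fun k => integral_nonneg (fun x => norm_nonneg _)) _ hCk
    intro k
    have h := norm_setIntegral_le_of_norm_le_const (μ := volume)
      (s := Set.Ioc (0:ℝ) 1) (f := fun x => ‖G k x‖) hmfin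
      (C := (3*(k:ℝ)+4) * (32/81)^(k+1))
      (fun x hx => by rw [norm_norm]; exact hbound k x hx)
    calc ∫ x in Set.Ioc (0:ℝ) 1, ‖G k x‖
        ≤ ‖∫ x in Set.Ioc (0:ℝ) 1, ‖G k x‖‖ := le_abs_self _
      _ ≤ ((3*(k:ℝ)+4) * (32/81)^(k+1)) * volume.real (Set.Ioc (0:ℝ) 1) := h
      _ = (3*(k:ℝ)+4) * (32/81)^(k+1) := by
          rw [Real.volume_real_Ioc]; norm_num
  calc ∑' k : ℕ, (8/3 : ℝ)^(k+1) / ((((3*(k+1)).choose (k+1) : ℕ)) : ℝ)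
      = ∑' k : ℕ, ∫ x in Set.Ioc (0:ℝ) 1, G k x := tsum_congr term_eq
    _ = ∫ x in Set.Ioc (0:ℝ) 1, ∑' k : ℕ, G k x :=
        integral_tsum_of_summable_integral_norm hint hnormsum
    _ = ∫ x in Set.Ioc (0:ℝ) 1,
          (27/((3-2*x)*(4*x^2-2*x+1))^2 - 6/((3-2*x)*(4*x^2-2*x+1)) - 1) := by
        apply setIntegral_congr_fun measurableSet_Ioc
        intro x hx
        exact pointwise_sum hx.1.le hx.2
    _ = ∫ x in (0:ℝ)..1,
          (27/((3-2*x)*(4*x^2-2*x+1))^2 - 6/((3-2*x)*(4*x^2-2*x+1)) - 1) :=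
        (intervalIntegral.integral_of_le (by norm_num)).symm
    _ = 32/49 + (74*Real.sqrt 3*π)/343 - (18/343)*Real.log 3 := integral_g
end

section
/- ∑_{k=1}^∞ (−1)^k (216/49)^k / (k · C(3k,k)) = (4√3/9)·arctan(√3/5) − (2/3)·log 7. -/
open Real MeasureTheory intervalIntegral Finset

lemma prod_fac (a b : ℕ) : a.factorial * ∏ j ∈ Finset.range (b+1), (a+1+j) = (a+b+1).factorial := by
  induction b with
  | zero => simp [Nat.factorial_succ]; ring
  | succ n ih =>
    rw [Finset.prod_range_succ, ← mul_assoc, ih,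
      show a+(n+1)+1 = (a+n+1)+1 from by ring]
    conv_rhs => rw [Nat.factorial_succ]
    ring

lemma beta_nat_s7 (a b : ℕ) :
    ∫ t in (0:ℝ)..1, t^a * (1-t)^b = a.factorial * b.factorial / (a+b+1).factorial := by
  have hfa : (a.factorial : ℂ) ≠ 0 := by exact_mod_cast a.factorial_ne_zero
  have hfab : ((a+b+1).factorial : ℂ) ≠ 0 := by exact_mod_cast (a+b+1).factorial_ne_zero
  have h1 : Complex.betaIntegral (a+1) (b+1)
      = ((∫ t in (0:ℝ)..1, t^a * (1-t)^b : ℝ) : ℂ) := by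
    rw [Complex.betaIntegral, ← intervalIntegral.integral_ofReal]
    apply intervalIntegral.integral_congr
    intro x _
    push_cast
    rw [add_sub_cancel_right, add_sub_cancel_right, Complex.cpow_natCast, Complex.cpow_natCast]
  have h2 := Complex.betaIntegral_eval_nat_add_one_right
    (u := (a:ℂ)+1) (by simp; positivity) b
  have h3 : (∏ j ∈ Finset.range (b+1), ((a:ℂ)+1+j)) = ((a+b+1).factorial : ℂ) / (a.factorial : ℂ) := by
    have hc : ((a.factorial * ∏ j ∈ Finset.range (b+1), (a+1+j) : ℕ) : ℂ) = ((a+b+1).factorial : ℂ) := by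
      rw [prod_fac a b]
    push_cast at hc
    rw [eq_div_iff hfa]
    linear_combination hc
  rw [h3] at h2
  have h4 : ((∫ t in (0:ℝ)..1, t^a * (1-t)^b : ℝ) : ℂ)
      = ((a.factorial * b.factorial / (a+b+1).factorial : ℝ) : ℂ) := by
    rw [← h1, h2]
    push_cast
    field_simp
  exact_mod_cast h4

/-- the summand functions -/
noncomputable def Fk (k : ℕ) (t : ℝ) : ℝ := (-(216/49) : ℝ)^(k+1) * (t^k * (1-t)^(2*k+2))

/-- the limit integrand -/
noncomputable def G (t : ℝ) : ℝ := -216*(1-t)^2/(49+216*t*(1-t)^2)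

lemma term_eq_integral (k : ℕ) :
    (-(216/49) : ℝ)^(k+1) / ((((k:ℝ)+1)) * (((3*(k+1)).choose (k+1) : ℕ) : ℝ)) =
    ∫ t in Set.Ioc (0:ℝ) 1, Fk k t := by
  have hB : ∫ t in Set.Ioc (0:ℝ) 1, (t^k * (1-t)^(2*k+2))
      = (k.factorial : ℝ) * (2*k+2).factorial / (3*k+3).factorial := by
    rw [← intervalIntegral.integral_of_le (by norm_num : (0:ℝ) ≤ 1),
      show 3*k+3 = k+(2*k+2)+1 from by omega]
    exact beta_nat_s7 k (2*k+2)
  have hint : ∫ t in Set.Ioc (0:ℝ) 1, Fk k t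
      = (-(216/49) : ℝ)^(k+1) * ((k.factorial : ℝ) * (2*k+2).factorial / (3*k+3).factorial) := by
    rw [← hB, ← MeasureTheory.integral_const_mul]
    rfl
  rw [hint]
  -- now pure arithmetic with the choose identity
  have hch := Nat.choose_mul_factorial_mul_factorial (show k+1 ≤ 3*(k+1) by omega)
  have h2 : 3*(k+1) - (k+1) = 2*k+2 := by omega
  rw [h2] at hch
  have hchR : (((3*(k+1)).choose (k+1) : ℕ) : ℝ) * (k+1).factorial * (2*k+2).factorial
      = ((3*(k+1)).factorial : ℝ) := by exact_mod_cast congrArg (Nat.cast : ℕ → ℝ) hch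
  have h3 : ((3*(k+1)).factorial : ℝ) = ((3*k+3).factorial : ℝ) := by norm_num [show 3*(k+1)=3*k+3 from by omega]
  have hfs : ((k+1).factorial : ℝ) = ((k:ℝ)+1) * k.factorial := by
    rw [Nat.factorial_succ]; push_cast; ring
  rw [h3, hfs] at hchR
  have hc0 : (((3*(k+1)).choose (k+1) : ℕ) : ℝ) ≠ 0 := by
    exact_mod_cast Nat.choose_pos (show k+1 ≤ 3*(k+1) by omega) |>.ne'
  have hk0 : ((k:ℝ)+1) ≠ 0 := by positivity
  have hf1 : ((3*k+3).factorial : ℝ) ≠ 0 := by exact_mod_cast (3*k+3).factorial_ne_zero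
  have hf2 : ((2*k+2).factorial : ℝ) ≠ 0 := by exact_mod_cast (2*k+2).factorial_ne_zero
  have hf3 : (k.factorial : ℝ) ≠ 0 := by exact_mod_cast k.factorial_ne_zero
  have key : ((k.factorial:ℝ) * (2*k+2).factorial / (3*k+3).factorial)
      = 1 / (((k:ℝ)+1) * (((3*(k+1)).choose (k+1) : ℕ) : ℝ)) := by
    rw [div_eq_div_iff hf1 (by exact mul_ne_zero hk0 hc0)]
    linear_combination hchR
  rw [key, mul_one_div]

lemma Fk_cont (k : ℕ) : Continuous (Fk k) := by
  unfold Fk; continuity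

lemma cube_bound {t : ℝ} (ht : t ∈ Set.Icc (0:ℝ) 1) : 0 ≤ t*(1-t)^2 ∧ t*(1-t)^2 ≤ 4/27 := by
  obtain ⟨h0, h1⟩ := ht
  constructor
  · positivity
  · nlinarith [sq_nonneg (3*t-1), sq_nonneg (1-t)]

lemma Fk_norm_bound (k : ℕ) {t : ℝ} (ht : t ∈ Set.Icc (0:ℝ) 1) :
    ‖Fk k t‖ ≤ (216/49) * (32/49)^k := by
  obtain ⟨h0, h1⟩ := ht
  have hc := cube_bound ⟨h0, h1⟩
  have e : t^k * (1-t)^(2*k+2) = (t*(1-t)^2)^k * (1-t)^2 := by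
    rw [mul_pow, ← pow_mul, show 2*k+2 = k*2+2 from by ring, pow_add]
    ring
  have h2 : ‖Fk k t‖ = (216/49)^(k+1) * ((t*(1-t)^2)^k * (1-t)^2) := by
    unfold Fk
    rw [norm_mul, norm_pow, norm_neg, norm_div]
    simp only [Real.norm_ofNat, Real.norm_eq_abs]
    rw [abs_of_nonneg (mul_nonneg (pow_nonneg h0 _) (pow_nonneg (by linarith) _)), e]
  rw [h2]
  have h3 : (t*(1-t)^2)^k ≤ (4/27:ℝ)^k := pow_le_pow_left₀ hc.1 hc.2 k
  have h4 : (1-t)^2 ≤ 1 := by nlinarith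
  calc (216/49:ℝ)^(k+1) * ((t*(1-t)^2)^k * (1-t)^2)
      ≤ (216/49)^(k+1) * ((4/27)^k * 1) := by
        apply mul_le_mul_of_nonneg_left _ (by positivity)
        exact mul_le_mul h3 h4 (by positivity) (by positivity)
    _ = (216/49) * (32/49)^k := by
        rw [pow_succ, mul_one, mul_comm ((216/49:ℝ)^k), mul_assoc, ← mul_pow]
        norm_num

lemma swap_lemma :
    ∑' k : ℕ, ∫ t in Set.Ioc (0:ℝ) 1, Fk k t = ∫ t in Set.Ioc (0:ℝ) 1, ∑' k : ℕ, Fk k t := by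
  apply MeasureTheory.integral_tsum_of_summable_integral_norm
  · exact fun k => (Fk_cont k).integrableOn_Ioc
  · apply Summable.of_nonneg_of_le
      (fun k => integral_nonneg (fun t => norm_nonneg _))
      (fun k => ?_)
      (((summable_geometric_of_lt_one (by norm_num) (by norm_num : (32/49:ℝ) < 1)).mul_left (216/49)))
    calc ∫ t in Set.Ioc (0:ℝ) 1, ‖Fk k t‖
        ≤ ∫ _t in Set.Ioc (0:ℝ) 1, (216/49) * (32/49:ℝ)^k := by
          apply MeasureTheory.setIntegral_mono_on
          · exact ((Fk_cont k).norm).integrableOn_Ioc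
          · exact integrableOn_const (measure_Ioc_lt_top.ne)
          · exact measurableSet_Ioc
          · exact fun t ht => Fk_norm_bound k (Set.mem_Icc_of_Ioc ht)
      _ = (216/49) * (32/49:ℝ)^k := by
          rw [MeasureTheory.setIntegral_const]
          simp

lemma pointwise_sum_s7 {t : ℝ} (ht : t ∈ Set.Icc (0:ℝ) 1) : ∑' k : ℕ, Fk k t = G t := by
  have hc := cube_bound ht
  set r : ℝ := -(216/49) * (t*(1-t)^2) with hr
  have hrn : ‖r‖ < 1 := by
    rw [hr, norm_mul, norm_neg, norm_div]
    simp only [Real.norm_ofNat, Real.norm_eq_abs]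
    rw [abs_of_nonneg hc.1]
    nlinarith [hc.2]
  have he : ∀ k : ℕ, Fk k t = (-(216/49) * (1-t)^2) * r^k := by
    intro k
    unfold Fk
    rw [hr, mul_pow, mul_pow, ← pow_mul, show 2*k+2 = k*2+2 from by ring, pow_add, pow_succ]
    ring
  rw [tsum_congr he, tsum_mul_left, tsum_geometric_of_norm_lt_one hrn]
  have hden : (0:ℝ) < 1 - r := by
    have := abs_lt.mp hrn
    linarith [this.2]
  have h1 : (1:ℝ) - r ≠ 0 := ne_of_gt hden
  have h2 : (49:ℝ)+216*t*(1-t)^2 ≠ 0 := by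
    have : (0:ℝ) ≤ 216*t*(1-t)^2 := by
      have := ht.1; positivity
    linarith
  unfold G
  rw [hr] at h1 ⊢
  rw [inv_eq_one_div, mul_one_div, div_eq_div_iff h1 h2]
  ring

noncomputable def Fprim (t : ℝ) : ℝ :=
  -(7/9)*Real.log (6*t+1) - (1/9)*Real.log (36*t^2-78*t+49)
  + (4*Real.sqrt 3/27)*Real.arctan ((12*t-13)/(3*Real.sqrt 3))

lemma quad_pos (t : ℝ) : (0:ℝ) < 36*t^2-78*t+49 := by nlinarith [sq_nonneg (12*t-13)]

lemma hasDeriv_Fprim {t : ℝ} (ht : t ∈ Set.Icc (0:ℝ) 1) : HasDerivAt Fprim (G t) t := by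
  have hs : Real.sqrt 3 ^ 2 = 3 := Real.sq_sqrt (by norm_num)
  have hsp : (0:ℝ) < Real.sqrt 3 := Real.sqrt_pos.mpr (by norm_num)
  have hl : (0:ℝ) < 6*t+1 := by have := ht.1; linarith
  have hq := quad_pos t
  have h1 : HasDerivAt (fun t : ℝ => Real.log (6*t+1)) (6/(6*t+1)) t := by
    have hinner : HasDerivAt (fun t : ℝ => 6*t+1) 6 t := by
      simpa using ((hasDerivAt_id t).const_mul 6).add_const 1
    simpa using hinner.log (ne_of_gt hl)
  have h2 : HasDerivAt (fun t : ℝ => Real.log (36*t^2-78*t+49)) ((72*t-78)/(36*t^2-78*t+49)) t := by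
    have hinner : HasDerivAt (fun t : ℝ => 36*t^2-78*t+49) (72*t-78) t := by
      have := (((hasDerivAt_pow 2 t).const_mul 36).sub ((hasDerivAt_id t).const_mul 78)).add_const 49
      exact this.congr_deriv (by ring)
    simpa using hinner.log (ne_of_gt hq)
  have h3 : HasDerivAt (fun t : ℝ => Real.arctan ((12*t-13)/(3*Real.sqrt 3)))
      ((12/(3*Real.sqrt 3))/(1+((12*t-13)/(3*Real.sqrt 3))^2)) t := by
    have hinner : HasDerivAt (fun t : ℝ => (12*t-13)/(3*Real.sqrt 3)) (12/(3*Real.sqrt 3)) t := by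
      have : HasDerivAt (fun t : ℝ => 12*t-13) 12 t := by
        simpa using ((hasDerivAt_id t).const_mul 12).sub_const 13
      simpa [div_eq_mul_inv] using this.mul_const (3*Real.sqrt 3)⁻¹
    convert hinner.arctan using 1
    simp [div_eq_mul_inv]
    ring
  have hF : HasDerivAt Fprim
      (-(7/9)*(6/(6*t+1)) - (1/9)*((72*t-78)/(36*t^2-78*t+49))
        + (4*Real.sqrt 3/27)*((12/(3*Real.sqrt 3))/(1+((12*t-13)/(3*Real.sqrt 3))^2))) t := by
    exact ((h1.const_mul (-(7/9))).sub (h2.const_mul (1/9))).add (h3.const_mul (4*Real.sqrt 3/27))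
  convert hF using 1
  unfold G
  have h27 : ((3:ℝ)*Real.sqrt 3)^2 = 27 := by nlinarith [hs]
  have harc : (4*Real.sqrt 3/27)*((12/(3*Real.sqrt 3))/(1+((12*t-13)/(3*Real.sqrt 3))^2))
      = 4/(36*t^2-78*t+49) := by
    have h1 : 1+((12*t-13)/(3*Real.sqrt 3))^2 = (4*(36*t^2-78*t+49))/27 := by
      rw [div_pow, h27]
      ring
    rw [h1, eq_div_iff (ne_of_gt hq)]
    field_simp
    rw [mul_div_assoc, div_self (by nlinarith [hq]), mul_one]; norm_num
  rw [harc]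
  have hgz : (0:ℝ) < 49+216*t*(1-t)^2 := by
    nlinarith [mul_nonneg ht.1 (sq_nonneg (1-t))]
  rw [div_eq_iff (ne_of_gt hgz)]
  field_simp
  have e1 : t*6+1 ≠ 0 := by linarith
  have e2 : t*(t*36-78)+49 ≠ 0 := by nlinarith
  field_simp
  ring

lemma arctan_id : Real.arctan (13*Real.sqrt 3/9) - Real.arctan (Real.sqrt 3/9)
    = 3 * Real.arctan (Real.sqrt 3/5) := by
  have hs : Real.sqrt 3 ^ 2 = 3 := Real.sq_sqrt (by norm_num)
  have hsp : (0:ℝ) < Real.sqrt 3 := Real.sqrt_pos.mpr (by norm_num)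
  have hs2 : Real.sqrt 3 < 2 := by nlinarith
  have t1 : Real.arctan (Real.sqrt 3/5) + Real.arctan (Real.sqrt 3/5)
      = Real.arctan (5*Real.sqrt 3/11) := by
    rw [Real.arctan_add (by nlinarith)]
    congr 1
    rw [div_eq_div_iff (by nlinarith) (by norm_num)]
    nlinarith
  have t2 : Real.arctan (5*Real.sqrt 3/11) + Real.arctan (Real.sqrt 3/5)
      = Real.arctan (9*Real.sqrt 3/10) := by
    rw [Real.arctan_add (by nlinarith)]
    congr 1
    rw [div_eq_div_iff (by nlinarith) (by norm_num)]
    nlinarith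
  have t3 : Real.arctan (9*Real.sqrt 3/10) + Real.arctan (Real.sqrt 3/9)
      = Real.arctan (13*Real.sqrt 3/9) := by
    rw [Real.arctan_add (by nlinarith)]
    congr 1
    rw [div_eq_div_iff (by nlinarith) (by norm_num)]
    nlinarith
  linarith

lemma G_contOn : ContinuousOn G (Set.Icc (0:ℝ) 1) := by
  apply ContinuousOn.div
  · exact (by continuity : Continuous fun t : ℝ => -216*(1-t)^2).continuousOn
  · exact (by continuity : Continuous fun t : ℝ => 49+216*t*(1-t)^2).continuousOn
  · intro t ht
    have := ht.1
    nlinarith [mul_nonneg ht.1 (sq_nonneg (1-t))]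

lemma integral_G : ∫ t in (0:ℝ)..1, G t =
    (4*Real.sqrt 3/9)*Real.arctan (Real.sqrt 3/5) - (2/3)*Real.log 7 := by
  have hs : Real.sqrt 3 ^ 2 = 3 := Real.sq_sqrt (by norm_num)
  have hsp : (0:ℝ) < Real.sqrt 3 := Real.sqrt_pos.mpr (by norm_num)
  have hderiv : ∀ t ∈ Set.uIcc (0:ℝ) 1, HasDerivAt Fprim (G t) t := by
    rw [Set.uIcc_of_le (by norm_num : (0:ℝ) ≤ 1)]
    exact fun t ht => hasDeriv_Fprim ht
  have hint : IntervalIntegrable G volume 0 1 := by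
    apply ContinuousOn.intervalIntegrable
    rw [Set.uIcc_of_le (by norm_num : (0:ℝ) ≤ 1)]
    exact G_contOn
  rw [intervalIntegral.integral_eq_sub_of_hasDerivAt hderiv hint]
  unfold Fprim
  norm_num
  have e1 : (-1:ℝ)/(3*Real.sqrt 3) = -(Real.sqrt 3/9) := by
    rw [div_eq_iff (by positivity)]
    nlinarith [hs]
  have e2 : (-13:ℝ)/(3*Real.sqrt 3) = -(13*Real.sqrt 3/9) := by
    rw [div_eq_iff (by positivity)]
    nlinarith [hs]
  have e3 : Real.log 49 = 2 * Real.log 7 := by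
    rw [show (49:ℝ) = 7^2 from by norm_num, Real.log_pow]
    norm_num
  rw [e1, e2, e3, Real.arctan_neg, Real.arctan_neg]
  linear_combination (4*Real.sqrt 3/27) * arctan_id

theorem stmt_7 :
    ∑' k : ℕ, (-(216/49) : ℝ)^(k+1) / ((((k:ℝ)+1)) * (((3*(k+1)).choose (k+1) : ℕ) : ℝ)) =
    (4*Real.sqrt 3/9)*Real.arctan (Real.sqrt 3/5) - (2/3)*Real.log 7 := by
  have h1 : ∑' k : ℕ, (-(216/49) : ℝ)^(k+1) / ((((k:ℝ)+1)) * (((3*(k+1)).choose (k+1) : ℕ) : ℝ))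
      = ∑' k : ℕ, ∫ t in Set.Ioc (0:ℝ) 1, Fk k t := by
    exact tsum_congr term_eq_integral
  rw [h1, swap_lemma]
  have h2 : ∫ t in Set.Ioc (0:ℝ) 1, ∑' k : ℕ, Fk k t = ∫ t in Set.Ioc (0:ℝ) 1, G t := by
    apply MeasureTheory.setIntegral_congr_fun measurableSet_Ioc
    intro t ht
    exact pointwise_sum_s7 (Set.mem_Icc_of_Ioc ht)
  rw [h2, ← intervalIntegral.integral_of_le (by norm_num : (0:ℝ) ≤ 1)]
  exact integral_G
end
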